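/- Let S ⊆ [ℓ+α] be the set of positions h where an independent set I contains at most one of the t nodes σ¹_(h,w¹_h), ..., σ^t_(h,w^t_h), and for i ≠ j let ψ^h_{i,j} = 1 iff both σ^i_(h,w^i_h) and σ^j_(h,w^j_h) belong to I. If for every pair i ≠ j, Σ_h ψ^h_{i,j} ≤ α, then Σ_{h=1}^{ℓ+α} Σ_{i=1}^t |I ∩ {σ^i_(h,w^i_h)}| ≤ (ℓ+α) + 2α · t(t−1)/2 ≤ ℓ + α t². -/

import Mathlib

/-- The counting argument of the helper claim: let `σ i h` denote the node
`σ^i_(h, w^i_h)`, and let `I` be a set of vertices. If for every pair `i ≠ j` the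
number of positions `h` with both `σ i h ∈ I` and `σ j h ∈ I` is at most `α`, then
`Σ_{h=1}^{ℓ+α} Σ_{i=1}^t |I ∩ {σ i h}| ≤ (ℓ+α) + 2α·t(t−1)/2 ≤ ℓ + α t²`.
(The set `S` of positions where `I` contains at most one of the `t` nodes is used in
the proof; for `h ∈ S` the inner sum is at most `1`, and otherwise it is bounded by
twice the number of doubly-occupied pairs.) -/
theorem stmt19 {V : Type} [DecidableEq V] (t ℓ α : ℕ) (ht : 1 ≤ t)
    (σ : Fin t → Fin (ℓ + α) → V) (I : Finset V)
    (hψ : ∀ i j : Fin t, i ≠ j →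
      (Finset.univ.filter (fun h : Fin (ℓ + α) => σ i h ∈ I ∧ σ j h ∈ I)).card ≤ α) :
    (∑ h : Fin (ℓ + α), ∑ i : Fin t, (if σ i h ∈ I then 1 else 0)) ≤
        (ℓ + α) + 2 * α * (t * (t - 1) / 2) ∧
    (ℓ + α) + 2 * α * (t * (t - 1) / 2) ≤ ℓ + α * t ^ 2 := by
  -- First: 2 * (t*(t-1)/2) = t*(t-1) since t*(t-1) is even
  have heven : 2 * (t * (t - 1) / 2) = t * (t - 1) := by
    apply Nat.two_mul_div_two_of_even
    rcases t with _ | n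
    · simp
    · simpa [Nat.succ_sub_one, mul_comm] using Nat.even_mul_succ_self n
  have hkey : 2 * α * (t * (t - 1) / 2) = α * (t * (t - 1)) := by
    rw [mul_assoc 2 α, mul_comm α, ← mul_assoc, heven, mul_comm]
  constructor
  · -- main counting
    -- inner sum equals the card of the filtered set
    have hinner : ∀ h : Fin (ℓ + α),
        (∑ i : Fin t, (if σ i h ∈ I then 1 else 0)) =
        (Finset.univ.filter (fun i : Fin t => σ i h ∈ I)).card := by
      intro h; rw [Finset.card_filter]
    set s : Fin (ℓ + α) → Finset (Fin t) :=
      fun h => Finset.univ.filter (fun i : Fin t => σ i h ∈ I) with hs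
    have hstep : ∀ h, (s h).card ≤ 1 + (s h).offDiag.card := by
      intro h
      rw [Finset.offDiag_card]
      rcases hc : (s h).card with _ | n
      · simp
      · have : (n + 1) * (n + 1) - (n + 1) = (n + 1) * n := by
          rw [Nat.mul_succ]; omega
        rw [this]
        nlinarith
    have hoff : ∀ h, (s h).offDiag =
        (Finset.univ : Finset (Fin t)).offDiag.filter
          (fun p => σ p.1 h ∈ I ∧ σ p.2 h ∈ I) := by
      intro h
      ext p
      simp [Finset.mem_offDiag, hs, and_comm, and_assoc]
      tauto
    calc (∑ h : Fin (ℓ + α), ∑ i : Fin t, (if σ i h ∈ I then 1 else 0))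
        = ∑ h, (s h).card := by simp_rw [hinner]; rfl
      _ ≤ ∑ h : Fin (ℓ + α), (1 + (s h).offDiag.card) := Finset.sum_le_sum fun h _ => hstep h
      _ = (ℓ + α) + ∑ h, (s h).offDiag.card := by
          rw [Finset.sum_add_distrib]; simp
      _ ≤ (ℓ + α) + α * (t * (t - 1)) := by
          gcongr
          have := fun h => hoff h
          simp_rw [this, Finset.card_filter]
          rw [Finset.sum_comm]
          have hb : ∀ p ∈ (Finset.univ : Finset (Fin t)).offDiag,
              (∑ h : Fin (ℓ + α), if σ p.1 h ∈ I ∧ σ p.2 h ∈ I then 1 else 0) ≤ α := by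
            intro p hp
            rw [Finset.mem_offDiag] at hp
            rw [← Finset.card_filter]
            exact hψ p.1 p.2 hp.2.2
          calc (∑ p ∈ (Finset.univ : Finset (Fin t)).offDiag,
                ∑ h : Fin (ℓ + α), if σ p.1 h ∈ I ∧ σ p.2 h ∈ I then 1 else 0)
              ≤ ∑ _p ∈ (Finset.univ : Finset (Fin t)).offDiag, α := Finset.sum_le_sum hb
            _ = (Finset.univ : Finset (Fin t)).offDiag.card * α := by
                rw [Finset.sum_const, smul_eq_mul]
            _ = α * (t * (t - 1)) := by
                rw [Finset.offDiag_card]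
                have h1 : (Finset.univ : Finset (Fin t)).card = t := Finset.card_univ.trans (Fintype.card_fin t)
                rw [h1]
                have h2 : t * (t - 1) = t * t - t := Nat.mul_pred ..
                rw [← h2, mul_comm]
      _ = (ℓ + α) + 2 * α * (t * (t - 1) / 2) := by rw [hkey]
  · rw [hkey]
    rcases t with _ | n
    · omega
    · have : (n + 1) * ((n + 1) - 1) = (n + 1) * n := by rw [Nat.add_sub_cancel]
      rw [this, pow_two]
      nlinarith
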